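/- Let R be a commutative ring, H and G additive abelian groups, and f : H →+ G an injective group homomorphism. Then R[G] = AddMonoidAlgebra R G is a free module over R[H] = AddMonoidAlgebra R H via the ring homomorphism induced by f; more precisely, there is a basis of R[G] over R[H] indexed by the quotient group G ⧸ f(H), given by the basis elements of any set of coset representatives of f(H) in G. -/

import Mathlib

/-- Footnote 3: if `f : H → G` is an injective homomorphism of abelian groups, then `R[G]` is a
free `R[H]`-module, with basis given by the basis elements of any set of coset representatives of
`f(H)` in `G`, indexed by the quotient group `G ⧸ f(H)`. -/
theorem free_monoidAlgebra_of_injective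
    {R : Type*} [CommRing R] {H G : Type*} [AddCommGroup H] [AddCommGroup G]
    (f : H →+ G) (hf : Function.Injective f)
    (s : G ⧸ f.range → G)
    (hs : ∀ c : G ⧸ f.range, (QuotientAddGroup.mk (s c) : G ⧸ f.range) = c) :
    let F : AddMonoidAlgebra R H →+* AddMonoidAlgebra R G :=
      AddMonoidAlgebra.mapDomainRingHom R f
    letI := F.toAlgebra
    ∃ b : Module.Basis (G ⧸ f.range) (AddMonoidAlgebra R H) (AddMonoidAlgebra R G),
      ∀ c : G ⧸ f.range, b c = AddMonoidAlgebra.single (s c) (1 : R) := by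
  intro F
  letI := F.toAlgebra
  classical
  -- the bijection `(G ⧸ f.range) × H ≃ G`, `(c, h) ↦ s c + f h`
  have hmk0 : ∀ h : H, ((f h : G) : G ⧸ f.range) = 0 := fun h =>
    (QuotientAddGroup.eq_zero_iff _).mpr ⟨h, rfl⟩
  have hinj : Function.Injective (fun ch : (G ⧸ f.range) × H => s ch.1 + f ch.2) := by
    rintro ⟨c, h⟩ ⟨c', h'⟩ hch
    simp only at hch
    have hc : c = c' := by
      have h1 := congrArg (fun g : G => (g : G ⧸ f.range)) hch
      simpa [QuotientAddGroup.mk_add, hmk0, hs] using h1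
    subst hc
    have hh : f h = f h' := by
      exact add_left_cancel hch
    exact Prod.ext rfl (hf hh)
  have hsurj : Function.Surjective (fun ch : (G ⧸ f.range) × H => s ch.1 + f ch.2) := by
    intro g
    have hmem : g - s (QuotientAddGroup.mk g) ∈ f.range := by
      rw [← QuotientAddGroup.eq_zero_iff]
      simp [QuotientAddGroup.mk_sub, hs]
    obtain ⟨h, hh⟩ := hmem
    exact ⟨(QuotientAddGroup.mk g, h), by simp [hh]⟩
  let e : (G ⧸ f.range) × H ≃ G := Equiv.ofBijective _ ⟨hinj, hsurj⟩
  -- the candidate `R[H]`-linear map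
  let L : ((G ⧸ f.range) →₀ AddMonoidAlgebra R H) →ₗ[AddMonoidAlgebra R H]
      AddMonoidAlgebra R G :=
    Finsupp.linearCombination (AddMonoidAlgebra R H)
      (fun c => AddMonoidAlgebra.single (s c) (1 : R))
  -- the comparison `R`-linear bijection
  let B : ((G ⧸ f.range) →₀ AddMonoidAlgebra R H) →ₗ[R] AddMonoidAlgebra R G :=
    (AddMonoidAlgebra.coeffLinearEquiv R).symm.toLinearMap ∘ₗ
    ((Finsupp.lmapDomain R R e).comp (Finsupp.finsuppProdLEquiv R).symm.toLinearMap) ∘ₗ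
    (Finsupp.mapRange.linearEquiv (AddMonoidAlgebra.coeffLinearEquiv R)).toLinearMap
  have hBbij : Function.Bijective B := by
    have hmd : Function.Bijective (Finsupp.mapDomain (M := R) e) := by
      have hcoe : ⇑(Finsupp.equivCongrLeft (M := R) e) = Finsupp.mapDomain e := by
        funext x
        rw [Finsupp.equivCongrLeft_apply, Finsupp.equivMapDomain_eq_mapDomain]
      rw [← hcoe]
      exact (Finsupp.equivCongrLeft e).bijective
    exact (AddMonoidAlgebra.coeffLinearEquiv R).symm.bijective.comp
      ((hmd.comp (Finsupp.finsuppProdLEquiv R).symm.bijective).comp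
        (Finsupp.mapRange.linearEquiv (AddMonoidAlgebra.coeffLinearEquiv R)).bijective)
  have key : ∀ (c : G ⧸ f.range) (p : AddMonoidAlgebra R H),
      L (Finsupp.single c p) = B (Finsupp.single c p) := by
    intro c p
    induction p using AddMonoidAlgebra.induction with
    | zero => simp
    | single_add h r p hph hr ih =>
      rw [Finsupp.single_add, map_add, map_add, ih]
      congr 1
      have hL : L (Finsupp.single c (AddMonoidAlgebra.single h r)) =
          AddMonoidAlgebra.single (f h + s c) r := by
        rw [Finsupp.linearCombination_single, Algebra.smul_def]
        show (AddMonoidAlgebra.mapDomainRingHom R f) (AddMonoidAlgebra.single h r) *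
          AddMonoidAlgebra.single (s c) (1 : R) = _
        rw [AddMonoidAlgebra.mapDomainRingHom_apply, AddMonoidAlgebra.mapDomain_single]
        rw [AddMonoidAlgebra.single_mul_single, mul_one]
      have hB : B (Finsupp.single c (AddMonoidAlgebra.single h r)) =
          AddMonoidAlgebra.single (s c + f h) r := by
        have hmr : (Finsupp.mapRange.linearEquiv (AddMonoidAlgebra.coeffLinearEquiv R))
            (Finsupp.single c (AddMonoidAlgebra.single h r)) =
            Finsupp.single c (Finsupp.single h r) := by
          simp [Finsupp.mapRange.linearEquiv_apply, Finsupp.mapRange_single,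
            AddMonoidAlgebra.coeff_single]
        show (AddMonoidAlgebra.coeffLinearEquiv R).symm (Finsupp.mapDomain e
          ((Finsupp.finsuppProdLEquiv R).symm
            ((Finsupp.mapRange.linearEquiv (AddMonoidAlgebra.coeffLinearEquiv R))
              (Finsupp.single c (AddMonoidAlgebra.single h r))))) = _
        rw [hmr]
        have huncurry : (Finsupp.finsuppProdLEquiv R).symm
            (Finsupp.single c (Finsupp.single h r)) = Finsupp.single (c, h) r := by
          show Finsupp.uncurry (Finsupp.single c (Finsupp.single h r)) = _
          rw [Finsupp.uncurry_single]
        rw [huncurry, Finsupp.mapDomain_single]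
        rfl
      rw [hL, hB]
      rw [add_comm]
  have hLB : ⇑L = ⇑B := by
    funext x
    induction x using Finsupp.induction with
    | zero => simp
    | single_add c p x hcx hp ih =>
      rw [map_add, map_add, ih, key]
  have hbij : Function.Bijective L := by rw [hLB]; exact hBbij
  let LE := LinearEquiv.ofBijective L hbij
  refine ⟨Module.Basis.ofRepr LE.symm, fun c => ?_⟩
  rw [Module.Basis.coe_ofRepr]
  simp only [LinearEquiv.symm_symm, LinearEquiv.ofBijective_apply]
  show L (Finsupp.single c 1) = _
  rw [Finsupp.linearCombination_single, one_smul]
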